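/- Suppose every 3-element face of a 12-vertex 6-dimensional complementarity weak pseudomanifold M has as its link a connected combinatorial 2-manifold. Then c-counting forces every such link to be a 2-sphere: if c_i denotes the number of 4-element faces of degree i (link having i vertices), then Σ c_i = 495, Σ i·c_i = 3300, and Σ (2i−4)c_i ≤ 4620 with equality, hence every link of a 4-element face has exactly 2(deg−2) facets, i.e., Euler characteristic 2. -/

import Mathlib

open Finset

/-- `K` is an (abstract) simplicial complex: faces are nonempty finite sets,
closed under passing to nonempty subsets. -/
def IsComplex {V : Type} [DecidableEq V] (K : Finset (Finset V)) : Prop :=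
  (∀ σ ∈ K, σ.Nonempty) ∧ ∀ σ ∈ K, ∀ τ ⊆ σ, τ.Nonempty → τ ∈ K

/-- `K` is pure of dimension `d`: every face has at most `d+1` vertices and is
contained in a face with exactly `d+1` vertices (a facet). -/
def IsPure {V : Type} [DecidableEq V] (d : ℕ) (K : Finset (Finset V)) : Prop :=
  (∀ σ ∈ K, σ.card ≤ d + 1) ∧ ∀ σ ∈ K, ∃ γ ∈ K, σ ⊆ γ ∧ γ.card = d + 1

/-- `K` is a `d`-dimensional weak pseudomanifold: a pure `d`-dimensional simplicial
complex (with at least one facet) in which every `(d-1)`-face (i.e. `d`-element face)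
is contained in exactly two facets. -/
def IsWPM {V : Type} [DecidableEq V] (d : ℕ) (K : Finset (Finset V)) : Prop :=
  IsComplex K ∧ IsPure d K ∧ (∃ σ ∈ K, σ.card = d + 1) ∧
    ∀ σ ∈ K, σ.card = d → (K.filter fun γ => γ.card = d + 1 ∧ σ ⊆ γ).card = 2

/-- Complementarity: exactly one of each complementary pair of nonempty subsets
of the vertex set is a face. -/
def Complementarity {V : Type} [DecidableEq V] [Fintype V] (K : Finset (Finset V)) : Prop :=
  ∀ A : Finset V, A.Nonempty → Aᶜ.Nonempty → (A ∈ K ↔ Aᶜ ∉ K)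

/-- The link of `σ` in `K`: all faces `τ` disjoint from `σ` with `σ ∪ τ` a face. -/
def lk {V : Type} [DecidableEq V] (K : Finset (Finset V)) (σ : Finset V) :
    Finset (Finset V) :=
  K.filter fun τ => σ ∩ τ = ∅ ∧ σ ∪ τ ∈ K

/-- The vertex set of a simplicial complex. -/
def vertSet {V : Type} [DecidableEq V] [Fintype V] (K : Finset (Finset V)) : Finset V :=
  Finset.univ.filter fun v => ({v} : Finset V) ∈ K

/-- Euler characteristic of a simplicial complex. -/
def eulerChar {V : Type} [DecidableEq V] (K : Finset (Finset V)) : ℤ :=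
  ∑ σ ∈ K, (-1 : ℤ) ^ (σ.card - 1)

/-- A simplicial complex is connected if any two of its vertices are joined by a
path of edges. -/
def ComplexConnected {V : Type} [DecidableEq V] [Fintype V] (L : Finset (Finset V)) : Prop :=
  ∀ u ∈ vertSet L, ∀ v ∈ vertSet L,
    Relation.ReflTransGen (fun a b : V => ({a, b} : Finset V) ∈ L) u v

/-- `L` is a circle (cycle complex): a connected 1-dimensional simplicial complex in
which every vertex lies in exactly two edges. -/
def IsCycle {V : Type} [DecidableEq V] [Fintype V] (L : Finset (Finset V)) : Prop :=
  IsComplex L ∧ (∀ σ ∈ L, σ.card ≤ 2) ∧ (∃ σ ∈ L, σ.card = 2) ∧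
    (∀ v ∈ vertSet L, (L.filter fun e => e.card = 2 ∧ v ∈ e).card = 2) ∧
    ComplexConnected L

/-- `L` is a closed combinatorial 2-manifold: a 2-dimensional simplicial complex in
which the link of every vertex is a circle. -/
def IsClosed2Mfd {V : Type} [DecidableEq V] [Fintype V] (L : Finset (Finset V)) : Prop :=
  IsComplex L ∧ (∀ σ ∈ L, σ.card ≤ 3) ∧ (∃ σ ∈ L, σ.card = 3) ∧
    ∀ v ∈ vertSet L, IsCycle (lk L {v})

/-- `L` is a combinatorial 2-sphere: a connected closed combinatorial 2-manifold of
Euler characteristic 2. -/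
def Is2Sphere {V : Type} [DecidableEq V] [Fintype V] (L : Finset (Finset V)) : Prop :=
  IsClosed2Mfd L ∧ ComplexConnected L ∧ eulerChar L = 2

/-- The degree of a face: the number of vertices of its link. -/
def degFace {V : Type} [DecidableEq V] [Fintype V] (K : Finset (Finset V))
    (σ : Finset V) : ℕ :=
  (vertSet (lk K σ)).card

section Infra
variable {V : Type} [DecidableEq V] [Fintype V]

lemma mem_lk {K : Finset (Finset V)} {σ τ : Finset V} :
    τ ∈ lk K σ ↔ τ ∈ K ∧ σ ∩ τ = ∅ ∧ σ ∪ τ ∈ K := by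
  simp [lk, Finset.mem_filter]

lemma mem_vertSet {K : Finset (Finset V)} {v : V} :
    v ∈ vertSet K ↔ ({v} : Finset V) ∈ K := by simp [vertSet]

lemma double_count {α β : Type} (A : Finset α) (B : Finset β)
    (R : α → β → Prop) [∀ a b, Decidable (R a b)] :
    ∑ a ∈ A, (B.filter (fun b => R a b)).card
      = ∑ b ∈ B, (A.filter (fun a => R a b)).card := by
  simp_rw [Finset.card_filter]
  exact Finset.sum_comm

lemma parity_lemma {α : Type} [DecidableEq α] (s : Finset α) (f : α → ℕ)
    (hle : ∀ a ∈ s, f a ≤ 2) (he : Even (∑ a ∈ s, f a)) :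
    Even (s.filter (fun a => f a = 1)).card := by
  rw [Nat.even_iff] at he ⊢
  rw [Finset.sum_nat_mod] at he
  have : ∑ a ∈ s, f a % 2 = (s.filter (fun a => f a = 1)).card := by
    rw [Finset.card_filter]
    apply Finset.sum_congr rfl
    intro a ha
    have := hle a ha
    interval_cases h : f a <;> simp
  rw [this] at he
  omega

end Infra

set_option linter.unusedSectionVars false

section Surface
variable {V : Type} [DecidableEq V] [Fintype V] {L : Finset (Finset V)}

lemma edge_ne {L : Finset (Finset V)} {u v : V} (h : ({u,v} : Finset V) ∈ L)
    (hc : ({u,v} : Finset V).card = 2) : u ≠ v := by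
  intro h2; rw [h2, Finset.pair_eq_singleton] at hc; simp at hc

lemma faceSub (hm : IsComplex L) {σ τ : Finset V} (hσ : σ ∈ L) (hsub : τ ⊆ σ)
    (hne : τ.Nonempty) : τ ∈ L := hm.2 σ hσ τ hsub hne

lemma vert_of_mem (hm : IsComplex L) {σ : Finset V} (hσ : σ ∈ L) {v : V} (hv : v ∈ σ) :
    v ∈ vertSet L := by
  rw [mem_vertSet]
  exact faceSub hm hσ (Finset.singleton_subset_iff.2 hv) (Finset.singleton_nonempty v)

lemma edge_two_tris (hm : IsClosed2Mfd L) {u v : V} (huv : ({u,v} : Finset V) ∈ L)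
    (hne : u ≠ v) :
    (L.filter fun t => t.card = 3 ∧ u ∈ t ∧ v ∈ t).card = 2 := by
  have hu : u ∈ vertSet L := vert_of_mem hm.1 huv (by simp)
  have hcyc := hm.2.2.2 u hu
  have hvlk : v ∈ vertSet (lk L {u}) := by
    rw [mem_vertSet, mem_lk]
    refine ⟨faceSub hm.1 huv (by simp) (Finset.singleton_nonempty v), ?_, ?_⟩
    · exact Finset.singleton_inter_of_notMem (by simp [hne])
    · simpa using huv
  have hcount := hcyc.2.2.2.1 v hvlk
  rw [← hcount]
  apply Finset.card_bij (fun t _ => t.erase u)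
  · intro t ht
    simp only [Finset.mem_filter] at ht ⊢
    obtain ⟨htL, hc3, hut, hvt⟩ := ht
    have herase : t.erase u ∈ L := by
      apply faceSub hm.1 htL (Finset.erase_subset u t)
      rw [← Finset.card_pos, Finset.card_erase_of_mem hut, hc3]; norm_num
    refine ⟨?_, ?_, Finset.mem_erase.2 ⟨Ne.symm hne, hvt⟩⟩
    · rw [mem_lk]
      refine ⟨herase, ?_, ?_⟩
      · simp [Finset.eq_empty_iff_forall_notMem]
      · have : {u} ∪ t.erase u = t := by
          rw [← Finset.insert_eq, Finset.insert_erase hut]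
        rw [this]; exact htL
    · rw [Finset.card_erase_of_mem hut, hc3]
  · intro t1 h1 t2 h2 heq
    simp only [Finset.mem_filter] at h1 h2
    have := Finset.insert_erase h1.2.2.1
    have := Finset.insert_erase h2.2.2.1
    rw [← Finset.insert_erase h1.2.2.1, ← Finset.insert_erase h2.2.2.1, heq]
  · intro e he
    simp only [Finset.mem_filter, mem_lk] at he
    obtain ⟨⟨heL, hdisj, hunion⟩, hc2, hve⟩ := he
    have hue : u ∉ e := by
      intro h
      have : u ∈ ({u} : Finset V) ∩ e := by simp [h]
      rw [hdisj] at this; simp at this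
    refine ⟨insert u e, ?_, ?_⟩
    · simp only [Finset.mem_filter]
      refine ⟨by rw [← Finset.insert_eq] at hunion; simpa using hunion, ?_, by simp, by simp [hve]⟩
      rw [Finset.card_insert_of_notMem hue, hc2]
    · rw [Finset.erase_insert hue]
end Surface

section Graph

lemma exists_parent {V : Type} {G : SimpleGraph V} {r v : V}
    (h : G.Reachable r v) (hne : v ≠ r) :
    ∃ u, G.Adj u v ∧ G.dist r u + 1 = G.dist r v := by
  obtain ⟨p, hp⟩ := h.exists_walk_length_eq_dist
  have hpos : 0 < G.dist r v := h.pos_dist_of_ne (Ne.symm hne)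
  cases hrev : p.reverse with
  | nil =>
    simp [SimpleGraph.dist_self] at hpos
  | cons hadj q' =>
    rename_i w
    have hlen : q'.length + 1 = G.dist r v := by
      have h0 := congrArg SimpleGraph.Walk.length hrev
      rw [SimpleGraph.Walk.length_reverse, hp] at h0
      simpa [SimpleGraph.Walk.length_cons, eq_comm] using h0.symm
    refine ⟨w, hadj.symm, ?_⟩
    have h1 : G.dist r w ≤ q'.length := by
      have := SimpleGraph.dist_le q'.reverse
      simpa using this
    have h2 : G.dist r v ≤ G.dist r w + 1 := by
      obtain ⟨p', hp'⟩ :=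
        SimpleGraph.Reachable.exists_walk_length_eq_dist (⟨q'.reverse⟩ : G.Reachable r w)
      have := SimpleGraph.dist_le (p'.concat hadj.symm)
      rwa [SimpleGraph.Walk.length_concat, hp'] at this
    omega

end Graph

section Surface2
variable {V : Type} [DecidableEq V] [Fintype V] {L : Finset (Finset V)}

lemma edges_of_tri (hm : IsClosed2Mfd L) {t : Finset V} (ht : t ∈ L) (hc : t.card = 3) :
    (L.filter fun e => e.card = 2).filter (fun e => e ⊆ t) = t.powersetCard 2 := by
  ext e
  simp only [Finset.mem_filter, Finset.mem_powersetCard]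
  constructor
  · rintro ⟨⟨heL, hc2⟩, hsub⟩; exact ⟨hsub, hc2⟩
  · rintro ⟨hsub, hc2⟩
    exact ⟨⟨faceSub hm.1 ht hsub (by rw [← Finset.card_pos, hc2]; norm_num), hc2⟩, hsub⟩

lemma tris_of_edge_card (hm : IsClosed2Mfd L) {e : Finset V} (he : e ∈ L)
    (hc : e.card = 2) : (L.filter fun t => t.card = 3 ∧ e ⊆ t).card = 2 := by
  obtain ⟨u, v, hne, rfl⟩ := Finset.card_eq_two.1 hc
  rw [← edge_two_tris hm he hne]
  congr 1
  apply Finset.filter_congr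
  intro t htL
  simp [Finset.insert_subset_iff]

lemma three_two (hm : IsClosed2Mfd L) :
    3 * (L.filter fun t => t.card = 3).card = 2 * (L.filter fun e => e.card = 2).card := by
  classical
  have h := double_count (L.filter fun t => t.card = 3) (L.filter fun e => e.card = 2)
      (fun t e => e ⊆ t)
  have hL : ∀ t ∈ (L.filter fun t => t.card = 3),
      ((L.filter fun e => e.card = 2).filter (fun e => e ⊆ t)).card = 3 := by
    intro t ht
    rw [Finset.mem_filter] at ht
    rw [edges_of_tri hm ht.1 ht.2, Finset.card_powersetCard, ht.2]
    decide
  have hR : ∀ e ∈ (L.filter fun e => e.card = 2),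
      ((L.filter fun t => t.card = 3).filter (fun t => e ⊆ t)).card = 2 := by
    intro e he
    rw [Finset.mem_filter] at he
    rw [Finset.filter_filter]
    exact tris_of_edge_card hm he.1 he.2
  rw [Finset.sum_congr rfl hL, Finset.sum_congr rfl hR, Finset.sum_const, Finset.sum_const,
    smul_eq_mul, smul_eq_mul] at h
  omega

end Surface2

def surfG {V : Type} [DecidableEq V] (L : Finset (Finset V)) : SimpleGraph V where
  Adj a b := a ≠ b ∧ ({a, b} : Finset V) ∈ L
  symm := by
    constructor
    rintro a b ⟨h1, h2⟩
    exact ⟨h1.symm, by rwa [Finset.pair_comm]⟩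
  loopless := by constructor; rintro a ⟨h1, _⟩; exact h1 rfl

def dualG {V : Type} [DecidableEq V] (L F : Finset (Finset V)) :
    SimpleGraph (Finset V) where
  Adj t t' := t ≠ t' ∧ t ∈ L ∧ t' ∈ L ∧ t.card = 3 ∧ t'.card = 3 ∧
    (t ∩ t').card = 2 ∧ t ∩ t' ∉ F
  symm := by
    constructor
    rintro t t' ⟨h1, h2, h3, h4, h5, h6, h7⟩
    exact ⟨h1.symm, h3, h2, h5, h4, by rwa [Finset.inter_comm], by rwa [Finset.inter_comm]⟩
  loopless := by constructor; rintro t ⟨h1, _⟩; exact h1 rfl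

section Surface3
variable {V : Type} [DecidableEq V] [Fintype V] {L : Finset (Finset V)}

lemma reach_of_conn (hcx : IsComplex L) (hconn : ComplexConnected L) {u v : V}
    (hu : u ∈ vertSet L) (hv : v ∈ vertSet L) : (surfG L).Reachable u v := by
  have h := hconn u hu v hv
  induction h with
  | refl => exact SimpleGraph.Reachable.refl u
  | tail hsteps hstep ih =>
    rename_i b c
    by_cases hbc : b = c
    · subst hbc; exact ih (by assumption)

    · exact (ih (vert_of_mem hcx hstep (by simp))).trans
        (SimpleGraph.Adj.reachable ⟨hbc, hstep⟩)

lemma pair_subset {s : Finset V} {a b : V} (ha : a ∈ s) (hb : b ∈ s) :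
    ({a, b} : Finset V) ⊆ s := by
  rw [Finset.insert_subset_iff, Finset.singleton_subset_iff]; exact ⟨ha, hb⟩

lemma pair_card {a b : V} (h : a ≠ b) : ({a, b} : Finset V).card = 2 := by
  rw [Finset.card_insert_of_notMem (by simp [h]), Finset.card_singleton]

lemma pair_mem_of_tri (hm : IsComplex L) {x : Finset V} (hx : x ∈ L) {a b : V}
    (ha : a ∈ x) (hb : b ∈ x) : ({a, b} : Finset V) ∈ L :=
  faceSub hm hx (pair_subset ha hb) ⟨a, by simp⟩

lemma class_const (hm : IsClosed2Mfd L) (hconn : ComplexConnected L)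
    (P : Finset V → Prop)
    (hall : ∀ e ∈ L, e.card = 2 →
      ∀ t ∈ L, t.card = 3 → e ⊆ t → ∀ t' ∈ L, t'.card = 3 → e ⊆ t' → (P t ↔ P t'))
    {t t' : Finset V} (ht : t ∈ L) (hc : t.card = 3) (ht' : t' ∈ L) (hc' : t'.card = 3) :
    P t ↔ P t' := by
  classical
  have claim1 : ∀ v ∈ vertSet L, ∀ s ∈ L, s.card = 3 → v ∈ s →
      ∀ s' ∈ L, s'.card = 3 → v ∈ s' → (P s ↔ P s') := by
    intro v hv s hs hcs hvs s' hs' hcs' hvs'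
    have hcyc := hm.2.2.2 v hv
    have hlkmem : ∀ x ∈ L, x.card = 3 → v ∈ x → ∀ u ∈ x.erase v,
        u ∈ vertSet (lk L {v}) := by
      intro x hx hcx hvx u hu
      rw [Finset.mem_erase] at hu
      rw [mem_vertSet, mem_lk]
      have hedge : ({v, u} : Finset V) ∈ L := pair_mem_of_tri hm.1 hx hvx hu.2
      refine ⟨faceSub hm.1 hedge (by simp) ⟨u, by simp⟩, ?_, ?_⟩
      · exact Finset.singleton_inter_of_notMem (by simp [Ne.symm hu.1])
      · simpa [← Finset.insert_eq] using hedge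
    have hstep : ∀ u, u ∈ vertSet (lk L {v}) → ∀ x ∈ L, x.card = 3 → v ∈ x → u ∈ x →
        ∀ y ∈ L, y.card = 3 → v ∈ y → u ∈ y → (P x ↔ P y) := by
      intro u hu x hx hcx hvx hux y hy hcy hvy huy
      have hne : u ≠ v := by
        rw [mem_vertSet, mem_lk] at hu
        intro h; subst h
        have h2 := hu.2.1
        have : u ∈ ({u} : Finset V) ∩ {u} := by simp
        rw [h2] at this; simp at this
      exact hall _ (pair_mem_of_tri hm.1 hx hvx hux) (pair_card (Ne.symm hne)) x hx hcx
        (pair_subset hvx hux) y hy hcy (pair_subset hvy huy)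
    obtain ⟨u, hu⟩ : (s.erase v).Nonempty := by
      rw [← Finset.card_pos, Finset.card_erase_of_mem hvs, hcs]; norm_num
    obtain ⟨u', hu'⟩ : (s'.erase v).Nonempty := by
      rw [← Finset.card_pos, Finset.card_erase_of_mem hvs', hcs']; norm_num
    have hulk := hlkmem s hs hcs hvs u hu
    have hulk' := hlkmem s' hs' hcs' hvs' u' hu'
    have hpath := hcyc.2.2.2.2 u hulk u' hulk'
    have key : ∀ w, Relation.ReflTransGen (fun a b : V => ({a, b} : Finset V) ∈ lk L {v}) u w →
        ∀ y ∈ L, y.card = 3 → v ∈ y → w ∈ y → (P s ↔ P y) := by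
      intro w hw
      induction hw with
      | refl =>
        intro y hy hcy hvy hwy
        exact hstep u hulk s hs hcs hvs (Finset.mem_of_mem_erase hu) y hy hcy hvy hwy
      | tail hsteps hstep2 ih =>
        rename_i b c
        intro y hy hcy hvy hcy'
        by_cases hbc : b = c
        · subst hbc; exact ih y hy hcy hvy hcy'
        · have hbclk := hstep2
          rw [mem_lk] at hstep2
          obtain ⟨hbcL, hdisj, huni⟩ := hstep2
          have hvnotbc : v ∉ ({b, c} : Finset V) := by
            intro h
            have : v ∈ ({v} : Finset V) ∩ {b, c} := by simp [h]
            rw [hdisj] at this; simp at this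
          have htri : ({v} ∪ {b, c} : Finset V) ∈ L := huni
          have hcard3 : ({v} ∪ {b, c} : Finset V).card = 3 := by
            rw [← Finset.insert_eq, Finset.card_insert_of_notMem hvnotbc, pair_card hbc]
          have hvT : v ∈ ({v} ∪ {b, c} : Finset V) := by simp
          have hbT : b ∈ ({v} ∪ {b, c} : Finset V) := by simp
          have hcT : c ∈ ({v} ∪ {b, c} : Finset V) := by simp
          have hclk : c ∈ vertSet (lk L {v}) := by
            rw [mem_vertSet]
            exact faceSub hcyc.1 hbclk (by simp) ⟨c, by simp⟩
          have h1 : P s ↔ P ({v} ∪ {b, c}) := ih _ htri hcard3 hvT hbT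
          have h2 : P ({v} ∪ {b, c}) ↔ P y := hstep c hclk _ htri hcard3 hvT hcT y hy hcy hvy hcy'
          exact h1.trans h2
    exact key u' hpath s' hs' hcs' hvs' (Finset.mem_of_mem_erase hu')
  -- global propagation
  obtain ⟨v, hvt⟩ : t.Nonempty := hm.1.1 t ht
  obtain ⟨v', hvt'⟩ : t'.Nonempty := hm.1.1 t' ht'
  have hvW : v ∈ vertSet L := vert_of_mem hm.1 ht hvt
  have hvW' : v' ∈ vertSet L := vert_of_mem hm.1 ht' hvt'
  have hpath := hconn v hvW v' hvW'
  have key2 : ∀ w, Relation.ReflTransGen (fun a b : V => ({a, b} : Finset V) ∈ L) v w →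
      ∀ y ∈ L, y.card = 3 → w ∈ y → (P t ↔ P y) := by
    intro w hw
    induction hw with
    | refl =>
      intro y hy hcy hwy
      exact claim1 v hvW t ht hc hvt y hy hcy hwy
    | tail hsteps hstep2 ih =>
      rename_i b c
      intro y hy hcy hcy'
      by_cases hbc : b = c
      · subst hbc; exact ih y hy hcy hcy'
      · -- find a triangle containing edge {b,c}
        have hedge : ({b, c} : Finset V) ∈ L := hstep2
        have hcard2 : ({b, c} : Finset V).card = 2 := pair_card hbc
        have h2 := tris_of_edge_card hm hedge hcard2
        have hpos : 0 < (L.filter fun s => s.card = 3 ∧ ({b, c} : Finset V) ⊆ s).card := by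
          rw [h2]; norm_num
        obtain ⟨T, hT⟩ := Finset.card_pos.1 hpos
        rw [Finset.mem_filter] at hT
        obtain ⟨hTL, hcT3, hsubT⟩ := hT
        have hbT : b ∈ T := hsubT (by simp)
        have hcT : c ∈ T := hsubT (by simp)
        have h1 : P t ↔ P T := ih T hTL hcT3 hbT
        have hcW : c ∈ vertSet L := vert_of_mem hm.1 hedge (by simp)
        have h2' : P T ↔ P y := claim1 c hcW T hTL hcT3 hcT y hy hcy hcy'
        exact h1.trans h2'
  exact key2 v' hpath t' ht' hc' hvt'

end Surface3

section Surface4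
variable {V : Type} [DecidableEq V] [Fintype V] {L : Finset (Finset V)}

lemma dual_conn (hm : IsClosed2Mfd L) (hconn : ComplexConnected L)
    (r : V) (p : V → V)
    (hp : ∀ v, v ∈ vertSet L ∧ v ≠ r →
      (surfG L).Adj (p v) v ∧ (surfG L).dist r (p v) + 1 = (surfG L).dist r v)
    (F : Finset (Finset V))
    (hF : ∀ e ∈ F, ∃ v, (v ∈ vertSet L ∧ v ≠ r) ∧ e = ({v, p v} : Finset V))
    {t0 t1 : Finset V} (ht0 : t0 ∈ L) (hc0 : t0.card = 3) (ht1 : t1 ∈ L)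
    (hc1 : t1.card = 3) : (dualG L F).Reachable t0 t1 := by
  classical
  by_contra hnot
  set d := (surfG L).dist r with hd
  set P : Finset V → Prop := fun t => (dualG L F).Reachable t0 t with hP
  have hnotall : ¬ (∀ e ∈ L, e.card = 2 → ∀ t ∈ L, t.card = 3 → e ⊆ t →
      ∀ t' ∈ L, t'.card = 3 → e ⊆ t' → (P t ↔ P t')) := by
    intro hall
    exact hnot ((class_const hm hconn P hall ht0 hc0 ht1 hc1).mp
      (SimpleGraph.Reachable.refl t0))
  push_neg at hnotall
  obtain ⟨e0, he0L, hc20, ta, hta, hca, hsa, tb, htb, hcb, hsb, hne0⟩ := hnotall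
  -- any split edge lies in F
  have hsplitF : ∀ e ∈ L, e.card = 2 → ∀ t ∈ L, t.card = 3 → e ⊆ t →
      ∀ t' ∈ L, t'.card = 3 → e ⊆ t' → ¬(P t ↔ P t') → e ∈ F := by
    intro e heL hc2 t htL hc3 hsub t' ht'L hc3' hsub' hPne
    by_contra heF
    have htne : t ≠ t' := by rintro rfl; exact hPne Iff.rfl
    have hsubint : e ⊆ t ∩ t' := Finset.subset_inter hsub hsub'
    have hint2 : (t ∩ t').card = 2 := by
      have hle3 : (t ∩ t').card ≤ 3 := hc3 ▸ Finset.card_le_card (Finset.inter_subset_left)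
      have hge2 : 2 ≤ (t ∩ t').card := hc2 ▸ Finset.card_le_card hsubint
      rcases Nat.lt_or_ge (t ∩ t').card 3 with h | h
      · omega
      · exfalso
        have h1 : t ∩ t' = t :=
          Finset.eq_of_subset_of_card_le Finset.inter_subset_left (by omega)
        have h2 : t ⊆ t' := by rw [← h1]; exact Finset.inter_subset_right
        exact htne (Finset.eq_of_subset_of_card_le h2 (by omega))
    have hinte : t ∩ t' = e :=
      (Finset.eq_of_subset_of_card_le hsubint (by omega)).symm
    have hadj : (dualG L F).Adj t t' :=
      ⟨htne, htL, ht'L, hc3, hc3', hint2, by rwa [hinte]⟩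
    exact hPne ⟨fun h => h.trans hadj.reachable, fun h => h.trans hadj.symm.reachable⟩
  -- the boundary
  set bd : Finset (Finset V) := L.filter (fun e => e.card = 2 ∧
      (∃ t ∈ L, t.card = 3 ∧ e ⊆ t ∧ P t) ∧ (∃ t ∈ L, t.card = 3 ∧ e ⊆ t ∧ ¬ P t))
    with hbd
  have hbdF : ∀ e ∈ bd, e ∈ F := by
    intro e he
    rw [hbd, Finset.mem_filter] at he
    obtain ⟨heL, hc2, ⟨t, htL, hc3, hsub, hPt⟩, ⟨t', ht'L, hc3', hsub', hPt'⟩⟩ := he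
    exact hsplitF e heL hc2 t htL hc3 hsub t' ht'L hc3' hsub' (by tauto)
  have he0bd : e0 ∈ bd := by
    rw [hbd, Finset.mem_filter]
    rcases hne0 with ⟨hPa, hPb⟩ | ⟨hPa, hPb⟩
    · exact ⟨he0L, hc20, ⟨ta, hta, hca, hsa, hPa⟩, ⟨tb, htb, hcb, hsb, hPb⟩⟩
    · exact ⟨he0L, hc20, ⟨tb, htb, hcb, hsb, hPb⟩, ⟨ta, hta, hca, hsa, hPa⟩⟩
  -- the set of endpoints of boundary edges
  set S : Finset V := bd.biUnion id with hS
  have hSne : S.Nonempty := by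
    obtain ⟨x, hx⟩ : e0.Nonempty := by rw [← Finset.card_pos, hc20]; norm_num
    exact ⟨x, Finset.mem_biUnion.2 ⟨e0, he0bd, hx⟩⟩
  obtain ⟨vst, hvstS, hvstmax⟩ := Finset.exists_max_image S d hSne
  -- every boundary edge containing a point x has the form {x, u}
  have hend : ∀ e ∈ bd, ∀ x ∈ e, ∃ u, u ≠ x ∧ e = ({x, u} : Finset V) := by
    intro e he x hx
    rw [hbd, Finset.mem_filter] at he
    obtain ⟨a, b, hab, rfl⟩ := Finset.card_eq_two.1 he.2.1
    rcases Finset.mem_insert.1 hx with rfl | hx'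
    · exact ⟨b, hab.symm, rfl⟩
    · rw [Finset.mem_singleton] at hx'
      subst hx'
      exact ⟨a, hab, Finset.pair_comm a x⟩
  obtain ⟨e1, he1bd, hve1⟩ := Finset.mem_biUnion.1 hvstS
  obtain ⟨u1, hu1ne, he1eq⟩ := hend e1 he1bd vst hve1
  -- neighbours, colored triangles at vst
  set N : Finset V := Finset.univ.filter
      (fun u => u ≠ vst ∧ ({vst, u} : Finset V) ∈ L) with hN
  set B : Finset (Finset V) := L.filter (fun t => t.card = 3 ∧ vst ∈ t ∧ P t) with hB
  set f : V → ℕ := fun u => (B.filter (fun t => u ∈ t)).card with hf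
  have hmemN : ∀ u ∈ N, u ≠ vst ∧ ({vst, u} : Finset V) ∈ L := by
    intro u hu; rw [hN, Finset.mem_filter] at hu; exact hu.2
  have hT2 : ∀ u ∈ N, (L.filter (fun t => t.card = 3 ∧ ({vst, u} : Finset V) ⊆ t)).card = 2 := by
    intro u hu
    obtain ⟨hune, huL⟩ := hmemN u hu
    exact tris_of_edge_card hm huL (pair_card (Ne.symm hune))
  have hfle : ∀ u ∈ N, f u ≤ 2 := by
    intro u hu
    rw [← hT2 u hu]
    apply Finset.card_le_card
    intro t ht
    rw [Finset.mem_filter] at ht ⊢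
    rw [hB, Finset.mem_filter] at ht
    obtain ⟨⟨htL, hc3, hvt, hPt⟩, hut⟩ := ht.imp_left id
    exact ⟨htL, hc3, pair_subset hvt hut⟩
  have hBfilter : ∀ u ∈ N, B.filter (fun t => u ∈ t)
      = (L.filter (fun t => t.card = 3 ∧ ({vst, u} : Finset V) ⊆ t)).filter P := by
    intro u hu
    ext t
    simp only [hB, Finset.mem_filter, Finset.insert_subset_iff, Finset.singleton_subset_iff]
    tauto
  have heven : Even (∑ u ∈ N, f u) := by
    have hdc := double_count N B (fun u t => u ∈ t)
    have hinner : ∀ t ∈ B, (N.filter (fun u => u ∈ t)).card = 2 := by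
      intro t ht
      rw [hB, Finset.mem_filter] at ht
      obtain ⟨htL, hc3, hvt, hPt⟩ := ht
      have : N.filter (fun u => u ∈ t) = t.erase vst := by
        ext u
        simp only [hN, Finset.mem_filter, Finset.mem_erase, Finset.mem_univ, true_and]
        constructor
        · rintro ⟨⟨h1, h2⟩, h3⟩; exact ⟨h1, h3⟩
        · rintro ⟨h1, h2⟩; exact ⟨⟨h1, pair_mem_of_tri hm.1 htL hvt h2⟩, h2⟩
      rw [this, Finset.card_erase_of_mem hvt, hc3]
    rw [Finset.sum_congr rfl hinner, Finset.sum_const, smul_eq_mul] at hdc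
    have heq : (∑ u ∈ N, f u) = B.card * 2 := hdc
    rw [heq]
    exact ⟨B.card, by ring⟩
  have hsplit_iff : ∀ u ∈ N, (({vst, u} : Finset V) ∈ bd ↔ f u = 1) := by
    intro u hu
    obtain ⟨hune, huL⟩ := hmemN u hu
    show ({vst, u} : Finset V) ∈ bd ↔ (B.filter (fun t => u ∈ t)).card = 1
    rw [hBfilter u hu]
    set T2 := L.filter (fun t => t.card = 3 ∧ ({vst, u} : Finset V) ⊆ t) with hT2def
    have hcT2 : T2.card = 2 := hT2 u hu
    constructor
    · intro hbdmem
      rw [hbd, Finset.mem_filter] at hbdmem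
      obtain ⟨_, _, ⟨t, htL, hc3, hsub, hPt⟩, ⟨t', ht'L, hc3', hsub', hPt'⟩⟩ := hbdmem
      have htmem : t ∈ T2 := by rw [hT2def, Finset.mem_filter]; exact ⟨htL, hc3, hsub⟩
      have ht'mem : t' ∈ T2 := by rw [hT2def, Finset.mem_filter]; exact ⟨ht'L, hc3', hsub'⟩
      have htne : t ≠ t' := by rintro rfl; exact hPt' hPt
      have hT2eq : T2 = {t, t'} := by
        apply (Finset.eq_of_subset_of_card_le ?_ ?_).symm
        · intro x hx
          rcases Finset.mem_insert.1 hx with rfl | hx'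
          · exact htmem
          · rw [Finset.mem_singleton] at hx'; subst hx'; exact ht'mem
        · rw [hcT2, Finset.card_insert_of_notMem (by simp [htne]), Finset.card_singleton]
      rw [hT2eq]
      have : ({t, t'} : Finset (Finset V)).filter P = {t} := by
        ext x
        simp only [Finset.mem_filter, Finset.mem_insert, Finset.mem_singleton]
        constructor
        · rintro ⟨rfl | rfl, hPx⟩
          · rfl
          · exact absurd hPx hPt'
        · rintro rfl; exact ⟨Or.inl rfl, hPt⟩
      rw [this, Finset.card_singleton]
    · intro hf1
      have hneg : (T2.filter (fun t => ¬ P t)).card = 1 := by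
        have := Finset.card_filter_add_card_filter_not (s := T2) (p := P)
        omega
      obtain ⟨t, ht⟩ := Finset.card_pos.1 (by rw [hf1]; norm_num :
        0 < (T2.filter P).card)
      obtain ⟨t', ht'⟩ := Finset.card_pos.1 (by rw [hneg]; norm_num :
        0 < (T2.filter (fun t => ¬ P t)).card)
      rw [Finset.mem_filter] at ht ht'
      rw [hT2def, Finset.mem_filter] at *
      exact ⟨huL, pair_card (Ne.symm hune),
        ⟨t, ht.1.1, ht.1.2.1, ht.1.2.2, ht.2⟩, ⟨t', ht'.1.1, ht'.1.2.1, ht'.1.2.2, ht'.2⟩⟩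
  -- u1 gives one sign change; parity gives a second
  have hu1N : u1 ∈ N := by
    rw [hN, Finset.mem_filter]
    exact ⟨Finset.mem_univ u1, hu1ne, by
      rw [← he1eq]
      rw [hbd, Finset.mem_filter] at he1bd
      exact he1bd.1⟩
  have hfu1 : f u1 = 1 := (hsplit_iff u1 hu1N).1 (he1eq ▸ he1bd)
  have hevenfilter : Even ((N.filter (fun u => f u = 1)).card) :=
    parity_lemma N f hfle heven
  have hu1mem : u1 ∈ N.filter (fun u => f u = 1) := by
    rw [Finset.mem_filter]; exact ⟨hu1N, hfu1⟩
  have hcard2 : 1 < (N.filter (fun u => f u = 1)).card := by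
    have hpos : 0 < (N.filter (fun u => f u = 1)).card := Finset.card_pos.2 ⟨u1, hu1mem⟩
    rcases hevenfilter with ⟨k, hk⟩
    omega
  obtain ⟨u2, hu2mem, hu2ne⟩ := Finset.exists_mem_ne hcard2 u1
  rw [Finset.mem_filter] at hu2mem
  obtain ⟨hu2N, hfu2⟩ := hu2mem
  -- both edges are in F; analyze their form
  have hkey : ∀ u ∈ N, f u = 1 → u = p vst := by
    intro u hu hfu
    have hbdmem : ({vst, u} : Finset V) ∈ bd := (hsplit_iff u hu).2 hfu
    have hFmem : ({vst, u} : Finset V) ∈ F := hbdF _ hbdmem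
    obtain ⟨v, hv, heq⟩ := hF _ hFmem
    obtain ⟨hadj, hdist⟩ := hp v hv
    have hpvne : p v ≠ v := hadj.ne
    have hune := (hmemN u hu).1
    -- vst ∈ {v, p v}
    have hvstmem : vst ∈ ({v, p v} : Finset V) := by
      rw [← heq]; exact Finset.mem_insert_self _ _
    rcases Finset.mem_insert.1 hvstmem with hvv | hvv
    · -- vst = v ; then u = p v
      have humem : u ∈ ({v, p v} : Finset V) := by
        rw [← heq]; exact Finset.mem_insert_of_mem (Finset.mem_singleton_self u)
      rcases Finset.mem_insert.1 humem with h | h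
      · exact absurd (h.trans hvv.symm) hune
      · rw [Finset.mem_singleton] at h; rw [h, hvv]
    · -- vst = p v ; contradiction with maximality
      rw [Finset.mem_singleton] at hvv
      exfalso
      have hvmem : v ∈ ({vst, u} : Finset V) := by rw [heq]; exact Finset.mem_insert_self _ _
      rcases Finset.mem_insert.1 hvmem with h | h
      · exact hpvne (hvv.symm.trans h.symm)
      · rw [Finset.mem_singleton] at h
        -- v = u ∈ S with d v = d vst + 1
        have hvS : v ∈ S := by
          rw [hS]
          exact Finset.mem_biUnion.2 ⟨{vst, u}, hbdmem, by rw [heq]; simp⟩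
        have := hvstmax v hvS
        rw [← hvv] at hdist
        omega
  have h1 := hkey u1 hu1N hfu1
  have h2 := hkey u2 hu2N hfu2
  exact hu2ne (h2.trans h1.symm)

end Surface4

section Surface5
variable {V : Type} [DecidableEq V] [Fintype V] {L : Finset (Finset V)}

lemma surface_ineq (hm : IsClosed2Mfd L) (hconn : ComplexConnected L) :
    2 * (vertSet L).card ≤ (L.filter fun t => t.card = 3).card + 4 := by
  classical
  obtain ⟨t0, ht0, hc0⟩ := hm.2.2.1
  obtain ⟨r, hrt0⟩ : t0.Nonempty := hm.1.1 t0 ht0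
  have hrW : r ∈ vertSet L := vert_of_mem hm.1 ht0 hrt0
  set G := surfG L with hG
  set d := G.dist r with hd
  have hreach : ∀ v ∈ vertSet L, G.Reachable r v := fun v hv =>
    reach_of_conn hm.1 hconn hrW hv
  have hex : ∀ v : V, ∃ u, (v ∈ vertSet L ∧ v ≠ r) → (G.Adj u v ∧ d u + 1 = d v) := by
    intro v
    by_cases h : v ∈ vertSet L ∧ v ≠ r
    · obtain ⟨u, hu⟩ := exists_parent (hreach v h.1) h.2
      exact ⟨u, fun _ => hu⟩
    · exact ⟨r, fun h' => absurd h' h⟩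
  choose p hp using hex
  have hpv : ∀ v, v ∈ vertSet L → v ≠ r → G.Adj (p v) v ∧ d (p v) + 1 = d v :=
    fun v h1 h2 => hp v ⟨h1, h2⟩
  set F := ((vertSet L).erase r).image (fun v => ({v, p v} : Finset V)) with hF
  have hFprop : ∀ e ∈ F, ∃ v, (v ∈ vertSet L ∧ v ≠ r) ∧ e = ({v, p v} : Finset V) := by
    intro e he
    rw [hF, Finset.mem_image] at he
    obtain ⟨v, hv, rfl⟩ := he
    rw [Finset.mem_erase] at hv
    exact ⟨v, ⟨hv.2, hv.1⟩, rfl⟩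
  have hFsub : F ⊆ L.filter (fun e => e.card = 2) := by
    intro e he
    obtain ⟨v, ⟨hvW, hvr⟩, rfl⟩ := hFprop e he
    obtain ⟨hadj, _⟩ := hpv v hvW hvr
    rw [Finset.mem_filter]
    have hne : v ≠ p v := hadj.ne'
    refine ⟨?_, pair_card hne⟩
    have h2 := hadj.2
    rwa [Finset.pair_comm] at h2
  have hFcard : F.card = (vertSet L).card - 1 := by
    rw [hF, Finset.card_image_of_injOn, Finset.card_erase_of_mem hrW]
    intro v1 h1 v2 h2 heq
    rw [Finset.mem_coe, Finset.mem_erase] at h1 h2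
    replace heq : ({v1, p v1} : Finset V) = {v2, p v2} := heq
    by_contra hne12
    obtain ⟨hadj1, hd1⟩ := hpv v1 h1.2 h1.1
    obtain ⟨hadj2, hd2⟩ := hpv v2 h2.2 h2.1
    have hv1mem : v1 ∈ ({v2, p v2} : Finset V) := by
      rw [← heq]; exact Finset.mem_insert_self _ _
    have hv2mem : v2 ∈ ({v1, p v1} : Finset V) := by
      rw [heq]; exact Finset.mem_insert_self _ _
    have hv1 : v1 = p v2 := by
      rcases Finset.mem_insert.1 hv1mem with h | h
      · exact absurd h hne12
      · exact Finset.mem_singleton.1 h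
    have hv2 : v2 = p v1 := by
      rcases Finset.mem_insert.1 hv2mem with h | h
      · exact absurd h.symm hne12
      · exact Finset.mem_singleton.1 h
    rw [← hv2] at hd1
    rw [← hv1] at hd2
    omega
  -- dual graph
  set D := dualG L F with hD
  have hdualreach : ∀ t ∈ L, t.card = 3 → D.Reachable t0 t := fun t ht hc =>
    dual_conn hm hconn r p (fun v hv => hpv v hv.1 hv.2) F hFprop ht0 hc0 ht hc
  set dd := D.dist t0 with hdd
  have hex2 : ∀ t : Finset V, ∃ s, (t ∈ L ∧ t.card = 3 ∧ t ≠ t0) →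
      (D.Adj s t ∧ dd s + 1 = dd t) := by
    intro t
    by_cases h : t ∈ L ∧ t.card = 3 ∧ t ≠ t0
    · obtain ⟨s, hs⟩ := exists_parent (hdualreach t h.1 h.2.1) h.2.2
      exact ⟨s, fun _ => hs⟩
    · exact ⟨t0, fun h' => absurd h' h⟩
  choose q hq using hex2
  set Tr := L.filter (fun t => t.card = 3) with hTr
  have hqv : ∀ t ∈ Tr.erase t0, D.Adj (q t) t ∧ dd (q t) + 1 = dd t := by
    intro t ht
    rw [Finset.mem_erase, hTr, Finset.mem_filter] at ht
    exact hq t ⟨ht.2.1, ht.2.2, ht.1⟩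
  set img := (Tr.erase t0).image (fun t => q t ∩ t) with himg
  have himgprop : ∀ t ∈ Tr.erase t0,
      (q t ∩ t) ∈ L ∧ (q t ∩ t).card = 2 ∧ (q t ∩ t) ∉ F := by
    intro t ht
    obtain ⟨hadj, _⟩ := hqv t ht
    obtain ⟨hne, hqL, htL, hcq, hct, hcint, hintF⟩ := hadj
    refine ⟨?_, hcint, hintF⟩
    apply faceSub hm.1 hqL Finset.inter_subset_left
    rw [← Finset.card_pos, hcint]; norm_num
  have himgsub : img ⊆ L.filter (fun e => e.card = 2) := by
    intro e he
    rw [himg, Finset.mem_image] at he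
    obtain ⟨t, ht, rfl⟩ := he
    obtain ⟨h1, h2, _⟩ := himgprop t ht
    rw [Finset.mem_filter]; exact ⟨h1, h2⟩
  have himgF : ∀ e ∈ img, e ∉ F := by
    intro e he
    rw [himg, Finset.mem_image] at he
    obtain ⟨t, ht, rfl⟩ := he
    exact (himgprop t ht).2.2
  have himgcard : img.card = Tr.card - 1 := by
    have ht0Tr : t0 ∈ Tr := by rw [hTr, Finset.mem_filter]; exact ⟨ht0, hc0⟩
    rw [himg, Finset.card_image_of_injOn, Finset.card_erase_of_mem ht0Tr]
    intro t1 h1 t2 h2 heq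
    rw [Finset.mem_coe] at h1 h2
    replace heq : q t1 ∩ t1 = q t2 ∩ t2 := heq
    by_contra hne12
    obtain ⟨hadj1, hdd1⟩ := hqv t1 h1
    obtain ⟨hadj2, hdd2⟩ := hqv t2 h2
    have he1L : (q t1 ∩ t1) ∈ L := (himgprop t1 h1).1
    have hc1e : (q t1 ∩ t1).card = 2 := (himgprop t1 h1).2.1
    have htris := tris_of_edge_card hm he1L hc1e
    set T2 := L.filter (fun t => t.card = 3 ∧ (q t1 ∩ t1) ⊆ t) with hT2
    have hmem : ∀ s, s ∈ L → s.card = 3 → (q t1 ∩ t1) ⊆ s → s ∈ T2 := by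
      intro s hs hcs hsub; rw [hT2, Finset.mem_filter]; exact ⟨hs, hcs, hsub⟩
    have ht1T : t1 ∈ T2 := hmem t1 hadj1.2.2.1 hadj1.2.2.2.2.1 Finset.inter_subset_right
    have hq1T : q t1 ∈ T2 := hmem (q t1) hadj1.2.1 hadj1.2.2.2.1 Finset.inter_subset_left
    have ht2T : t2 ∈ T2 := hmem t2 hadj2.2.2.1 hadj2.2.2.2.2.1 (heq ▸ Finset.inter_subset_right)
    have hq2T : q t2 ∈ T2 := hmem (q t2) hadj2.2.1 hadj2.2.2.2.1 (heq ▸ Finset.inter_subset_left)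
    have hne1 : q t1 ≠ t1 := hadj1.1
    have hT2eq : T2 = {q t1, t1} := by
      apply (Finset.eq_of_subset_of_card_le ?_ ?_).symm
      · intro x hx
        rcases Finset.mem_insert.1 hx with rfl | hx'
        · exact hq1T
        · rw [Finset.mem_singleton] at hx'; subst hx'; exact ht1T
      · rw [htris, Finset.card_insert_of_notMem (by simp [hne1]), Finset.card_singleton]
    have ht2cases := Finset.mem_insert.1 (hT2eq ▸ ht2T)
    have ht2q1 : t2 = q t1 := by
      rcases ht2cases with h | h
      · exact h
      · rw [Finset.mem_singleton] at h; exact absurd h.symm hne12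
    have hq2cases := Finset.mem_insert.1 (hT2eq ▸ hq2T)
    have hq2t1 : q t2 = t1 := by
      rcases hq2cases with h | h
      · rw [← ht2q1] at h; exact absurd h hadj2.1
      · exact Finset.mem_singleton.1 h
    rw [hq2t1, ht2q1] at hdd2
    omega
  -- counting
  have hdisj : Disjoint F img := by
    rw [Finset.disjoint_right]
    intro e he
    exact himgF e he
  have hunion : F ∪ img ⊆ L.filter (fun e => e.card = 2) :=
    Finset.union_subset hFsub himgsub
  have hcardle : F.card + img.card ≤ (L.filter (fun e => e.card = 2)).card := by
    rw [← Finset.card_union_of_disjoint hdisj]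
    exact Finset.card_le_card hunion
  have h32 := three_two hm
  have hWpos : 0 < (vertSet L).card := Finset.card_pos.2 ⟨r, hrW⟩
  have hTpos : 0 < Tr.card := Finset.card_pos.2
    ⟨t0, by rw [hTr, Finset.mem_filter]; exact ⟨ht0, hc0⟩⟩
  have hTrEq : Tr.card = (L.filter (fun t => t.card = 3)).card := by rw [hTr]
  rw [hFcard, himgcard] at hcardle
  omega

end Surface5

section Euler
variable {V : Type} [DecidableEq V] [Fintype V] {L : Finset (Finset V)}

lemma vert_card_eq (hm : IsClosed2Mfd L) :
    (L.filter fun s => s.card = 1).card = (vertSet L).card := by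
  symm
  apply Finset.card_bij (fun v _ => ({v} : Finset V))
  · intro v hv
    rw [Finset.mem_filter]
    exact ⟨mem_vertSet.1 hv, Finset.card_singleton v⟩
  · intro v1 _ v2 _ heq
    exact Finset.singleton_injective heq
  · intro s hs
    rw [Finset.mem_filter] at hs
    obtain ⟨x, rfl⟩ := Finset.card_eq_one.1 hs.2
    exact ⟨x, mem_vertSet.2 hs.1, rfl⟩

lemma euler_split (hm : IsClosed2Mfd L) :
    eulerChar L = ((vertSet L).card : ℤ) - ((L.filter fun e => e.card = 2).card : ℤ)
      + ((L.filter fun t => t.card = 3).card : ℤ) := by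
  classical
  have hterm : ∀ σ ∈ L, (-1 : ℤ) ^ (σ.card - 1)
      = (if σ.card = 1 then (1:ℤ) else 0) - (if σ.card = 2 then 1 else 0)
        + (if σ.card = 3 then 1 else 0) := by
    intro σ hσ
    have h1 : 1 ≤ σ.card := Finset.card_pos.2 (hm.1.1 σ hσ)
    have h3 : σ.card ≤ 3 := hm.2.1 σ hσ
    interval_cases h : σ.card <;> norm_num
  rw [eulerChar, Finset.sum_congr rfl hterm, Finset.sum_add_distrib,
    Finset.sum_sub_distrib, Finset.sum_boole, Finset.sum_boole, Finset.sum_boole,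
    vert_card_eq hm]

end Euler

/-- Lemma 4.5: suppose every 4-element face (tetrahedron) of a
12-vertex 6-dimensional weak pseudomanifold `M` with complementarity has as its
link a connected combinatorial 2-manifold. With `c i` the number of 4-element faces
of degree `i`, the counting `Σ cᵢ = 495`, `Σ i·cᵢ = 3300` and `Σ (2i-4)cᵢ ≤ 4620`
holds with equality in the last; hence the link of each 4-element face has exactly
`2·(deg - 2)` triangles, i.e. Euler characteristic 2. -/
theorem stmt_11 (M : Finset (Finset (Fin 12))) (hM : IsWPM 6 M)
    (hvert : ∀ v : Fin 12, ({v} : Finset (Fin 12)) ∈ M)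
    (hcomp : Complementarity M)
    (hlink : ∀ γ ∈ M, γ.card = 4 →
      IsClosed2Mfd (lk M γ) ∧ ComplexConnected (lk M γ))
    (c : ℕ → ℕ)
    (hc : ∀ i, c i = (M.filter fun σ => σ.card = 4 ∧ degFace M σ = i).card) :
    (∑ i ∈ Finset.range 13, c i = 495) ∧
    (∑ i ∈ Finset.range 13, i * c i = 3300) ∧
    (∑ i ∈ Finset.range 13, ((2 * i : ℤ) - 4) * c i = 4620) ∧
    (∀ γ ∈ M, γ.card = 4 →
      ((lk M γ).filter fun t => t.card = 3).card = 2 * degFace M γ - 4 ∧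
      eulerChar (lk M γ) = 2) := by
  classical
  obtain ⟨hcomplex, hpure, hfacetex, hwpm⟩ := hM
  have hcard7 : ∀ σ ∈ M, σ.card ≤ 7 := hpure.1
  have hnecard : ∀ (A : Finset (Fin 12)) (n : ℕ), A.card = n → 0 < n → A.Nonempty := by
    intro A n h hn; rw [← Finset.card_pos, h]; exact hn
  have hcompl_card : ∀ A : Finset (Fin 12), Aᶜ.card = 12 - A.card := by
    intro A; rw [Finset.card_compl, Fintype.card_fin]
  have h4mem : ∀ A : Finset (Fin 12), A.card = 4 → A ∈ M := by
    intro A hA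
    have hAne : A.Nonempty := hnecard A 4 hA (by norm_num)
    have hAcne : Aᶜ.Nonempty := by
      apply hnecard Aᶜ 8 _ (by norm_num)
      rw [hcompl_card, hA]
    have h := hcomp A hAne hAcne
    by_contra hAM
    have hAc : Aᶜ ∈ M := not_not.1 (fun hh => hAM (h.mpr hh))
    have hle := hcard7 Aᶜ hAc
    rw [hcompl_card, hA] at hle
    norm_num at hle
  set M4 := M.filter (fun σ => σ.card = 4) with hM4
  set M5 := M.filter (fun σ => σ.card = 5) with hM5
  set M6 := M.filter (fun σ => σ.card = 6) with hM6
  set M7 := M.filter (fun σ => σ.card = 7) with hM7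
  have hM4card : M4.card = 495 := by
    have heq : M4 = Finset.univ.powersetCard 4 := by
      ext σ
      rw [hM4, Finset.mem_filter, Finset.mem_powersetCard]
      constructor
      · rintro ⟨h1, h2⟩; exact ⟨Finset.subset_univ σ, h2⟩
      · rintro ⟨h1, h2⟩; exact ⟨h4mem σ h2, h2⟩
    rw [heq, Finset.card_powersetCard, Finset.card_univ, Fintype.card_fin]
    decide
  -- number of 6-faces: 462
  have hM6card : M6.card = 462 := by
    set S6 := (Finset.univ : Finset (Fin 12)).powersetCard 6 with hS6
    have hS6mem : ∀ A, A ∈ S6 ↔ A.card = 6 := by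
      intro A; rw [hS6, Finset.mem_powersetCard]
      exact ⟨fun h => h.2, fun h => ⟨Finset.subset_univ _, h⟩⟩
    have hsplit := Finset.card_filter_add_card_filter_not (s := S6) (p := (· ∈ M))
    have hS6card : S6.card = 924 := by
      rw [hS6, Finset.card_powersetCard, Finset.card_univ, Fintype.card_fin]
      decide
    have hbij : (S6.filter (· ∈ M)).card = (S6.filter (fun A => ¬ A ∈ M)).card := by
      apply Finset.card_bij (fun A _ => Aᶜ)
      · intro A hA
        rw [Finset.mem_filter] at hA ⊢
        obtain ⟨hA6, hAM⟩ := hA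
        rw [hS6mem] at hA6
        have hc6 : Aᶜ.card = 6 := by rw [hcompl_card, hA6]
        refine ⟨(hS6mem _).2 hc6, ?_⟩
        exact (hcomp A (hnecard A 6 hA6 (by norm_num))
          (hnecard Aᶜ 6 hc6 (by norm_num))).1 hAM
      · intro A1 _ A2 _ h
        have := congrArg (fun s => sᶜ) h
        simpa using this
      · intro B hB
        rw [Finset.mem_filter, hS6mem] at hB
        obtain ⟨hB6, hBM⟩ := hB
        have hc6 : Bᶜ.card = 6 := by rw [hcompl_card, hB6]
        refine ⟨Bᶜ, ?_, by simp⟩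
        rw [Finset.mem_filter, hS6mem]
        refine ⟨hc6, ?_⟩
        have h := hcomp Bᶜ (hnecard Bᶜ 6 hc6 (by norm_num))
          (by rw [compl_compl]; exact hnecard B 6 hB6 (by norm_num))
        rw [compl_compl] at h
        exact h.mpr hBM
      done
    have hMeq : M6 = S6.filter (· ∈ M) := by
      ext σ
      rw [hM6, Finset.mem_filter, Finset.mem_filter, hS6mem]
      exact and_comm
    rw [hMeq]
    omega
  -- number of facets: 132
  have hM7card : M7.card = 132 := by
    have hdc := double_count M6 M7 (fun σ γ => σ ⊆ γ)
    have hLHS : ∀ σ ∈ M6, (M7.filter (fun γ => σ ⊆ γ)).card = 2 := by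
      intro σ hσ
      rw [hM6, Finset.mem_filter] at hσ
      have := hwpm σ hσ.1 hσ.2
      rw [← this, hM7, Finset.filter_filter]
    have hRHS : ∀ γ ∈ M7, (M6.filter (fun σ => σ ⊆ γ)).card = 7 := by
      intro γ hγ
      rw [hM7, Finset.mem_filter] at hγ
      have heq : M6.filter (fun σ => σ ⊆ γ) = γ.powersetCard 6 := by
        ext τ
        rw [Finset.mem_filter, hM6, Finset.mem_filter, Finset.mem_powersetCard]
        constructor
        · rintro ⟨⟨h1, h2⟩, h3⟩; exact ⟨h3, h2⟩
        · rintro ⟨h1, h2⟩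
          exact ⟨⟨hcomplex.2 γ hγ.1 τ h1 (hnecard τ 6 h2 (by norm_num)), h2⟩, h1⟩
      rw [heq, Finset.card_powersetCard, hγ.2]
      decide
    rw [Finset.sum_congr rfl hLHS, Finset.sum_congr rfl hRHS, Finset.sum_const,
      Finset.sum_const, smul_eq_mul, smul_eq_mul, hM6card] at hdc
    omega
  -- number of 5-faces: 660
  have hM5card : M5.card = 660 := by
    set S5 := (Finset.univ : Finset (Fin 12)).powersetCard 5 with hS5
    have hS5mem : ∀ A, A ∈ S5 ↔ A.card = 5 := by
      intro A; rw [hS5, Finset.mem_powersetCard]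
      exact ⟨fun h => h.2, fun h => ⟨Finset.subset_univ _, h⟩⟩
    have hsplit := Finset.card_filter_add_card_filter_not (s := S5) (p := (· ∈ M))
    have hS5card : S5.card = 792 := by
      rw [hS5, Finset.card_powersetCard, Finset.card_univ, Fintype.card_fin]
      decide
    have hbij : (S5.filter (fun A => ¬ A ∈ M)).card = M7.card := by
      apply Finset.card_bij (fun A _ => Aᶜ)
      · intro A hA
        rw [Finset.mem_filter, hS5mem] at hA
        obtain ⟨hA5, hAM⟩ := hA
        have hc7 : Aᶜ.card = 7 := by rw [hcompl_card, hA5]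
        rw [hM7, Finset.mem_filter]
        refine ⟨?_, hc7⟩
        have h := hcomp A (hnecard A 5 hA5 (by norm_num)) (hnecard Aᶜ 7 hc7 (by norm_num))
        exact not_not.1 (fun hh => hAM (h.mpr hh))
      · intro A1 _ A2 _ h
        have := congrArg (fun s => sᶜ) h
        simpa using this
      · intro γ hγ
        rw [hM7, Finset.mem_filter] at hγ
        obtain ⟨hγM, hγ7⟩ := hγ
        have hc5 : γᶜ.card = 5 := by rw [hcompl_card, hγ7]
        refine ⟨γᶜ, ?_, by simp⟩
        rw [Finset.mem_filter, hS5mem]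
        refine ⟨hc5, ?_⟩
        have h := hcomp γᶜ (hnecard γᶜ 5 hc5 (by norm_num))
          (by rw [compl_compl]; exact hnecard γ 7 hγ7 (by norm_num))
        rw [compl_compl] at h
        exact fun hh => (h.mp hh) hγM
    have hMeq : M5 = S5.filter (· ∈ M) := by
      ext σ
      rw [hM5, Finset.mem_filter, Finset.mem_filter, hS5mem]
      exact and_comm
    rw [hMeq]
    omega
  -- degree characterization
  have hdeg : ∀ σ : Finset (Fin 12), degFace M σ
      = (Finset.univ.filter (fun v => v ∉ σ ∧ σ ∪ {v} ∈ M)).card := by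
    intro σ
    unfold degFace vertSet
    congr 1
    apply Finset.filter_congr
    intro v _
    rw [mem_lk]
    constructor
    · rintro ⟨h1, h2, h3⟩
      refine ⟨?_, h3⟩
      intro hv
      have : v ∈ σ ∩ {v} := by simp [hv]
      rw [h2] at this; simp at this
    · rintro ⟨h1, h2⟩
      exact ⟨hvert v, by rw [Finset.inter_comm]; exact Finset.singleton_inter_of_notMem h1, h2⟩
  have hdegle : ∀ σ ∈ M4, degFace M σ ∈ Finset.range 13 := by
    intro σ _
    rw [Finset.mem_range]
    have : (vertSet (lk M σ)).card ≤ 12 := by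
      have h := Finset.card_le_card (Finset.subset_univ (vertSet (lk M σ)))
      rwa [Finset.card_univ, Fintype.card_fin] at h
    unfold degFace
    omega
  -- fiber identities
  have hfiber : ∀ i, c i = (M4.filter (fun σ => degFace M σ = i)).card := by
    intro i
    rw [hc i, hM4, Finset.filter_filter]
  have hsum1 : ∑ i ∈ Finset.range 13, c i = 495 := by
    have h := Finset.card_eq_sum_card_fiberwise hdegle
    rw [← hM4card, h]
    apply Finset.sum_congr rfl
    intro i _
    rw [hfiber i]
  -- sum of degrees
  have hdegsum : ∑ σ ∈ M4, degFace M σ = 3300 := by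
    have hstep1 : ∑ σ ∈ M4, degFace M σ
        = ∑ σ ∈ M4, (Finset.univ.filter (fun v => v ∉ σ ∧ σ ∪ {v} ∈ M)).card :=
      Finset.sum_congr rfl (fun σ _ => hdeg σ)
    have hdc := double_count M4 (Finset.univ : Finset (Fin 12))
      (fun σ v => v ∉ σ ∧ σ ∪ {v} ∈ M)
    have hinner : ∀ v : Fin 12, ∀ _ : v ∈ (Finset.univ : Finset (Fin 12)),
        (M4.filter (fun σ => v ∉ σ ∧ σ ∪ {v} ∈ M)).card
        = (M5.filter (fun τ => v ∈ τ)).card := by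
      intro v _
      apply Finset.card_bij (fun σ _ => σ ∪ {v})
      · intro σ hσ
        rw [Finset.mem_filter] at hσ
        obtain ⟨hσ4, hvσ, hτM⟩ := hσ
        rw [hM4, Finset.mem_filter] at hσ4
        have hins : σ ∪ {v} = insert v σ := by ext x; simp [or_comm]
        rw [Finset.mem_filter, hM5, Finset.mem_filter]
        refine ⟨⟨hτM, ?_⟩, by simp⟩
        rw [hins, Finset.card_insert_of_notMem hvσ, hσ4.2]
      · intro σ1 h1 σ2 h2 heq
        rw [Finset.mem_filter] at h1 h2
        have hins1 : σ1 ∪ {v} = insert v σ1 := by ext x; simp [or_comm]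
        have hins2 : σ2 ∪ {v} = insert v σ2 := by ext x; simp [or_comm]
        rw [hins1, hins2] at heq
        have := congrArg (fun s => Finset.erase s v) heq
        simpa [Finset.erase_insert h1.2.1, Finset.erase_insert h2.2.1] using this
      · intro τ hτ
        rw [Finset.mem_filter, hM5, Finset.mem_filter] at hτ
        obtain ⟨⟨hτM, hτ5⟩, hvτ⟩ := hτ
        refine ⟨τ.erase v, ?_, ?_⟩
        · rw [Finset.mem_filter, hM4, Finset.mem_filter]
          have hec : (τ.erase v).card = 4 := by
            rw [Finset.card_erase_of_mem hvτ, hτ5]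
          have heM : τ.erase v ∈ M :=
            hcomplex.2 τ hτM _ (Finset.erase_subset v τ) (hnecard _ 4 hec (by norm_num))
          refine ⟨⟨heM, hec⟩, by simp, ?_⟩
          have : τ.erase v ∪ {v} = insert v (τ.erase v) := by ext x; simp [or_comm]
          rw [this, Finset.insert_erase hvτ]
          exact hτM
        · have : τ.erase v ∪ {v} = insert v (τ.erase v) := by ext x; simp [or_comm]
          rw [this, Finset.insert_erase hvτ]
    have hdc2 := double_count M5 (Finset.univ : Finset (Fin 12)) (fun τ v => v ∈ τ)
    have hinner2 : ∀ τ ∈ M5, (Finset.univ.filter (fun v => v ∈ τ)).card = 5 := by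
      intro τ hτ
      rw [hM5, Finset.mem_filter] at hτ
      have : Finset.univ.filter (fun v => v ∈ τ) = τ := by ext x; simp
      rw [this, hτ.2]
    rw [hstep1, hdc, Finset.sum_congr rfl hinner]
    have : ∑ v : Fin 12, (M5.filter (fun τ => v ∈ τ)).card
        = ∑ τ ∈ M5, (Finset.univ.filter (fun v => v ∈ τ)).card := hdc2.symm
    rw [this, Finset.sum_congr rfl hinner2, Finset.sum_const, smul_eq_mul, hM5card]
  have hsum2 : ∑ i ∈ Finset.range 13, i * c i = 3300 := by
    rw [← hdegsum, ← Finset.sum_fiberwise_of_maps_to hdegle (fun σ => degFace M σ)]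
    apply Finset.sum_congr rfl
    intro i _
    rw [hfiber i]
    rw [Finset.sum_congr rfl (fun σ hσ => (Finset.mem_filter.1 hσ).2), Finset.sum_const,
      smul_eq_mul, mul_comm]
  -- triangles in links = facets containing the face
  have htri : ∀ γ ∈ M4, ((lk M γ).filter fun t => t.card = 3).card
      = (M7.filter (fun δ => γ ⊆ δ)).card := by
    intro γ hγ
    rw [hM4, Finset.mem_filter] at hγ
    obtain ⟨hγM, hγ4⟩ := hγ
    apply Finset.card_bij (fun t _ => γ ∪ t)
    · intro t ht
      rw [Finset.mem_filter, mem_lk] at ht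
      obtain ⟨⟨htM, hdisj, huni⟩, hct⟩ := ht
      rw [Finset.mem_filter, hM7, Finset.mem_filter]
      have hdj : Disjoint γ t := Finset.disjoint_iff_inter_eq_empty.2 hdisj
      refine ⟨⟨huni, ?_⟩, Finset.subset_union_left⟩
      rw [Finset.card_union_of_disjoint hdj, hγ4, hct]
    · intro t1 h1 t2 h2 heq
      rw [Finset.mem_filter, mem_lk] at h1 h2
      have hd1 : Disjoint γ t1 := Finset.disjoint_iff_inter_eq_empty.2 h1.1.2.1
      have hd2 : Disjoint γ t2 := Finset.disjoint_iff_inter_eq_empty.2 h2.1.2.1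
      have := congrArg (fun s => s \ γ) heq
      simpa [Finset.union_sdiff_cancel_left hd1, Finset.union_sdiff_cancel_left hd2] using this
    · intro δ hδ
      rw [Finset.mem_filter, hM7, Finset.mem_filter] at hδ
      obtain ⟨⟨hδM, hδ7⟩, hγδ⟩ := hδ
      have hcsd : (δ \ γ).card = 3 := by
        rw [Finset.card_sdiff_of_subset hγδ, hδ7, hγ4]
      have hsdM : δ \ γ ∈ M :=
        hcomplex.2 δ hδM _ (Finset.sdiff_subset) (hnecard _ 3 hcsd (by norm_num))
      refine ⟨δ \ γ, ?_, Finset.union_sdiff_of_subset hγδ⟩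
      rw [Finset.mem_filter, mem_lk]
      exact ⟨⟨hsdM, Finset.inter_sdiff_self γ δ, by
        rw [Finset.union_sdiff_of_subset hγδ]; exact hδM⟩, hcsd⟩
  -- total number of (4-face, facet) incidences
  have htrisum : ∑ γ ∈ M4, ((lk M γ).filter fun t => t.card = 3).card = 4620 := by
    rw [Finset.sum_congr rfl htri]
    have hdc := double_count M4 M7 (fun γ δ => γ ⊆ δ)
    have hinner : ∀ δ ∈ M7, (M4.filter (fun γ => γ ⊆ δ)).card = 35 := by
      intro δ hδ
      rw [hM7, Finset.mem_filter] at hδ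
      have heq : M4.filter (fun γ => γ ⊆ δ) = δ.powersetCard 4 := by
        ext τ
        rw [Finset.mem_filter, hM4, Finset.mem_filter, Finset.mem_powersetCard]
        constructor
        · rintro ⟨⟨h1, h2⟩, h3⟩; exact ⟨h3, h2⟩
        · rintro ⟨h1, h2⟩; exact ⟨⟨h4mem τ h2, h2⟩, h1⟩
      rw [heq, Finset.card_powersetCard, hδ.2]
      decide
    rw [hdc, Finset.sum_congr rfl hinner, Finset.sum_const, smul_eq_mul, hM7card]
  -- per-face inequality from the surface theorem
  have hineq : ∀ γ ∈ M4, 2 * degFace M γ ≤ ((lk M γ).filter fun t => t.card = 3).card + 4 := by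
    intro γ hγ
    rw [hM4, Finset.mem_filter] at hγ
    obtain ⟨hmfd, hconn⟩ := hlink γ hγ.1 hγ.2
    exact surface_ineq hmfd hconn
  -- equality for each face
  have hzero : ∀ γ ∈ M4,
      (((lk M γ).filter fun t => t.card = 3).card : ℤ) + 4 - 2 * degFace M γ = 0 := by
    have hsumz : ∑ γ ∈ M4,
        ((((lk M γ).filter fun t => t.card = 3).card : ℤ) + 4 - 2 * degFace M γ) = 0 := by
      rw [Finset.sum_sub_distrib, Finset.sum_add_distrib]
      have h1 : ∑ γ ∈ M4, ((((lk M γ).filter fun t => t.card = 3).card : ℤ)) = 4620 := by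
        rw [← Nat.cast_sum]
        rw [htrisum]
        norm_num
      have h2 : ∑ γ ∈ M4, (4 : ℤ) = 1980 := by
        rw [Finset.sum_const, nsmul_eq_mul, hM4card]; norm_num
      have h3 : ∑ γ ∈ M4, (2 * (degFace M γ) : ℤ) = 6600 := by
        rw [← Finset.mul_sum, ← Nat.cast_sum, hdegsum]
        norm_num
      rw [h1, h2, h3]
      norm_num
    intro γ hγ
    have hnn : ∀ γ ∈ M4,
        0 ≤ (((lk M γ).filter fun t => t.card = 3).card : ℤ) + 4 - 2 * degFace M γ := by
      intro γ' hγ'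
      have := hineq γ' hγ'
      push_cast
      omega
    exact (Finset.sum_eq_zero_iff_of_nonneg hnn).1 hsumz γ hγ
  -- third sum
  have hsum3 : ∑ i ∈ Finset.range 13, ((2 * i : ℤ) - 4) * c i = 4620 := by
    have hcast1 : ∑ i ∈ Finset.range 13, ((i : ℤ) * c i) = 3300 := by
      have := congrArg (Nat.cast : ℕ → ℤ) hsum2
      push_cast at this
      convert this using 2
    have hcast2 : ∑ i ∈ Finset.range 13, ((c i : ℤ)) = 495 := by
      have := congrArg (Nat.cast : ℕ → ℤ) hsum1
      push_cast at this
      convert this using 2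
    calc ∑ i ∈ Finset.range 13, ((2 * i : ℤ) - 4) * c i
        = ∑ i ∈ Finset.range 13, (2 * ((i : ℤ) * c i) - 4 * (c i : ℤ)) := by
          apply Finset.sum_congr rfl; intro i _; ring
      _ = 2 * ∑ i ∈ Finset.range 13, ((i : ℤ) * c i)
            - 4 * ∑ i ∈ Finset.range 13, ((c i : ℤ)) := by
          rw [Finset.sum_sub_distrib, Finset.mul_sum, Finset.mul_sum]
      _ = 4620 := by rw [hcast1, hcast2]; norm_num
  refine ⟨hsum1, hsum2, hsum3, ?_⟩
  -- per-face conclusions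
  intro γ hγM hγ4
  have hγmem : γ ∈ M4 := by rw [hM4, Finset.mem_filter]; exact ⟨hγM, hγ4⟩
  have hz := hzero γ hγmem
  have hTeq : ((lk M γ).filter fun t => t.card = 3).card = 2 * degFace M γ - 4 := by
    omega
  refine ⟨hTeq, ?_⟩
  obtain ⟨hmfd, hconn⟩ := hlink γ hγM hγ4
  have h32 := three_two hmfd
  have hes := euler_split hmfd
  have hdegdef : (vertSet (lk M γ)).card = degFace M γ := rfl
  rw [hdegdef] at hes
  omega
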